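/- In the subdivided-K_5 instance with α = 5, every feasible fractional solution of the path-based LP relaxation (PB) has objective value strictly greater than 5. Combined with the feasible (AB)-solution of value 5, this shows the LP relaxation of the arc-based formulation (AB) is strictly weaker than that of the path-based formulation (PB), even on unweighted instances with unreachable-variable fixing. -/
import Mathlib

open scoped BigOperators

noncomputable section

variable {V : Type*}

/-- The weight of a walk: the sum of the (real) weights of its edges. -/
def walkWeight {G : SimpleGraph V} (w : Sym2 V → ℝ) {u v : V} (p : G.Walk u v) : ℝ :=
  (p.edges.map w).sum

/-- `P_uv`: the set of `u`-`v` paths of weight at most the bound `B u v`. -/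
def pathSet (G : SimpleGraph V) (w : Sym2 V → ℝ) (B : V → V → ℝ) (u v : V) :
    Set (G.Walk u v) := {p | p.IsPath ∧ walkWeight w p ≤ B u v}

/-- Feasibility for the LP relaxation of the path-based model (PB). -/
def PBFeasible (G : SimpleGraph V) (w : Sym2 V → ℝ) (K : Set (V × V)) (B : V → V → ℝ)
    (x : Sym2 V → ℝ) (y : ∀ u v : V, G.Walk u v → ℝ) : Prop :=
  (∀ e, 0 ≤ x e ∧ x e ≤ 1) ∧
  (∀ (u v : V) (p : G.Walk u v), 0 ≤ y u v p ∧ y u v p ≤ 1) ∧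
  (∀ uv ∈ K, 1 ≤ ∑ᶠ p ∈ pathSet G w B uv.1 uv.2, y uv.1 uv.2 p) ∧
  (∀ uv ∈ K, ∀ e : Sym2 V,
    ∑ᶠ p ∈ {p ∈ pathSet G w B uv.1 uv.2 | e ∈ p.edges}, y uv.1 uv.2 p ≤ x e)

/-- The original (degree-4) vertices of the subdivided `K₅`. -/
def origV : Set (ZMod 10) := {0, 2, 4, 6, 8}

/-- `K₅` with every edge of a fixed Hamilton cycle subdivided once. -/
def subK5 : SimpleGraph (ZMod 10) :=
  SimpleGraph.fromRel (fun i j =>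
    j = i + 1 ∨ (i ∈ origV ∧ j ∈ origV ∧ j ≠ i + 2 ∧ i ≠ j + 2))

/-! ### Auxiliary material -/

instance : DecidableRel subK5.Adj := fun a b =>
  decidable_of_iff (a ≠ b ∧ ((b = a + 1 ∨ ((a = 0 ∨ a = 2 ∨ a = 4 ∨ a = 6 ∨ a = 8) ∧
      (b = 0 ∨ b = 2 ∨ b = 4 ∨ b = 6 ∨ b = 8) ∧ b ≠ a + 2 ∧ a ≠ b + 2)) ∨
    (a = b + 1 ∨ ((b = 0 ∨ b = 2 ∨ b = 4 ∨ b = 6 ∨ b = 8) ∧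
      (a = 0 ∨ a = 2 ∨ a = 4 ∨ a = 6 ∨ a = 8) ∧ a ≠ b + 2 ∧ b ≠ a + 2)))) <| by
  rw [subK5, SimpleGraph.fromRel_adj]
  simp [origV, Set.mem_insert_iff]

lemma walkWeight_one {G : SimpleGraph V} {u v : V} (p : G.Walk u v) :
    walkWeight (fun _ => (1 : ℝ)) p = p.length := by
  induction p with
  | nil => simp [walkWeight]
  | cons h q ih =>
    simp only [walkWeight, SimpleGraph.Walk.edges_cons, List.map_cons, List.sum_cons,
      SimpleGraph.Walk.length_cons] at *
    rw [ih]; push_cast; ring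

lemma pathSet_finite (w : Sym2 (ZMod 10) → ℝ) (B : ZMod 10 → ZMod 10 → ℝ) (u v : ZMod 10) :
    (pathSet subK5 w B u v).Finite := by
  classical
  have h1 : {p : subK5.Walk u v | p.IsPath}.Finite := by
    haveI : Fintype {p : subK5.Walk u v // p.IsPath} :=
      inferInstanceAs (Fintype (subK5.Path u v))
    rw [← Subtype.range_coe_subtype]
    exact Set.finite_range _
  exact h1.subset fun p hp => hp.1

lemma steps_of_walk : ∀ {u v : ZMod 10} (p : subK5.Walk u v),
    (∀ e ∈ p.edges, ∃ i : ZMod 10, e = s(i, i+1)) →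
    ∃ k m : ℕ, k + m = p.length ∧ v = u + (k : ZMod 10) - (m : ZMod 10) ∧
      (m = 0 → p.edges =
        (List.range k).map (fun j : ℕ => s(u + (j : ZMod 10), u + (j : ZMod 10) + 1))) := by
  intro u v p
  induction p with
  | nil => intro _; exact ⟨0, 0, by simp, by simp, by simp⟩
  | @cons a w v h q ih =>
    intro hstep
    obtain ⟨i, hi⟩ := hstep s(a, w) (by simp)
    rcases Sym2.eq_iff.mp hi with ⟨rfl, rfl⟩ | ⟨ha, hw⟩
    · obtain ⟨k, m, hl, hv, he⟩ := ih (fun e he => hstep e (by simp [he]))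
      refine ⟨k + 1, m, by simpa using by omega, by push_cast; rw [hv]; ring, fun hm => ?_⟩
      rw [SimpleGraph.Walk.edges_cons, he hm, List.range_succ_eq_map, List.map_cons,
        List.map_map]
      congr 1
      · push_cast; ring_nf
      · apply List.map_congr_left
        intro j _
        simp only [Function.comp_apply]
        congr 1 <;> push_cast <;> ring
    · subst hw; subst ha
      obtain ⟨k, m, hl, hv, he⟩ := ih (fun e he => hstep e (by simp [he]))
      refine ⟨k, m + 1, by simpa using by omega, by push_cast; rw [hv]; ring, fun hm => by omega⟩

lemma path04_edges (p : subK5.Walk 0 4)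
    (hall : ∀ e ∈ p.edges, ∃ i : ZMod 10, e = s(i, i+1)) (hlen : p.length ≤ 5) :
    s(0, 1) ∈ p.edges ∧ s(1, 2) ∈ p.edges := by
  obtain ⟨k, m, hl, hv, he⟩ := steps_of_walk p hall
  have hk : (k : ZMod 10) = ((m + 4 : ℕ) : ZMod 10) := by
    push_cast
    linear_combination -hv
  rw [ZMod.natCast_eq_natCast_iff] at hk
  have hk' : k % 10 = (m + 4) % 10 := hk
  have hkm : k = 4 ∧ m = 0 := by omega
  obtain ⟨rfl, rfl⟩ := hkm
  rw [he rfl]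
  constructor <;> decide

/-- The ten edges of the subdividing cycle. -/
def cyE : Finset (Sym2 (ZMod 10)) :=
  {s(0, 1), s(1, 2), s(2, 3), s(3, 4), s(4, 5), s(5, 6), s(6, 7), s(7, 8), s(8, 9), s(9, 0)}

lemma edge_cases : ∀ e ∈ subK5.edgeSet, (∃ i : ZMod 10, e = s(i, i+1)) ∨ e ∉ cyE := by
  decide

/-- In the subdivided `K₅` with `α = 5` and `K` the set of adjacent pairs, every feasible
fractional solution of the path-based LP relaxation (PB) has objective value strictly
greater than `5`. -/
theorem subK5_PB_value_gt_five :
    ∀ (x : Sym2 (ZMod 10) → ℝ) (y : ∀ u v : ZMod 10, subK5.Walk u v → ℝ),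
      PBFeasible subK5 (fun _ => (1 : ℝ)) {p | subK5.Adj p.1 p.2}
        (fun u v => 5 * (subK5.dist u v : ℝ)) x y →
      5 < ∑ᶠ e ∈ subK5.edgeSet, (1 : ℝ) * x e := by
  classical
  intro x y hfeas
  obtain ⟨hx, hy, hflow, hcap⟩ := hfeas
  by_contra hobj
  push_neg at hobj
  -- notation
  set B : ZMod 10 → ZMod 10 → ℝ := fun u v => 5 * (subK5.dist u v : ℝ) with hB
  have hP : ∀ u v : ZMod 10,
      (pathSet subK5 (fun _ => (1 : ℝ)) B u v).Finite := fun u v => pathSet_finite _ _ u v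
  -- the objective as a finite sum
  have hE : subK5.edgeSet.Finite := Set.toFinite _
  have hobj' : ∑ e ∈ hE.toFinset, x e ≤ 5 := by
    rw [finsum_mem_eq_finite_toFinset_sum _ hE] at hobj
    simpa using hobj
  have hCyE : cyE ⊆ hE.toFinset := by
    intro e he
    rw [Set.Finite.mem_toFinset]
    fin_cases he <;> decide
  -- rewrite the capacity constraints as finite sums
  have hcap' : ∀ u v : ZMod 10, subK5.Adj u v → ∀ e : Sym2 (ZMod 10),
      ∑ p ∈ (hP u v).toFinset.filter (fun p => e ∈ p.edges), y u v p ≤ x e := by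
    intro u v huv e
    have h := hcap (u, v) huv e
    dsimp only at h
    have hseteq : {p ∈ pathSet subK5 (fun _ => (1 : ℝ)) B u v | e ∈ p.edges} =
        ↑((hP u v).toFinset.filter (fun p => e ∈ p.edges)) := by
      ext p
      simp [Set.Finite.mem_toFinset, Finset.mem_filter, Set.mem_setOf_eq, and_comm]
    rw [hseteq, finsum_mem_coe_finset] at h
    exact h
  have hflow' : ∀ u v : ZMod 10, subK5.Adj u v →
      1 ≤ ∑ p ∈ (hP u v).toFinset, y u v p := by
    intro u v huv
    have h := hflow (u, v) huv
    dsimp only at h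
    rwa [finsum_mem_eq_finite_toFinset_sum _ (hP u v)] at h
  -- Step 1: lower bounds around the degree-2 vertices
  have key : ∀ a s b : ZMod 10, (∀ w, subK5.Adj s w → w = b ∨ w = a) → subK5.Adj s b →
      1 ≤ x s(s, b) + x s(a, s) := by
    intro a s b hnb hsb
    have h1 := hflow' s b hsb
    set P := (hP s b).toFinset with hPdef
    have hsplit : ∀ p ∈ P, p ∈ P.filter (fun p => s(s, b) ∈ p.edges) ∪
        P.filter (fun p => s(a, s) ∈ p.edges) := by
      intro p hp
      cases p with
      | nil => exact absurd (Set.Finite.mem_toFinset _ |>.mp hp).1 (by simp_all [hsb.ne])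
      | @cons _ w _ h q =>
        rcases hnb w h with rfl | rfl
        · exact Finset.mem_union_left _ (Finset.mem_filter.mpr ⟨hp, by simp⟩)
        · refine Finset.mem_union_right _ (Finset.mem_filter.mpr ⟨hp, ?_⟩)
          rw [Sym2.eq_swap]; simp
    have h2 : ∑ p ∈ P, y s b p ≤
        ∑ p ∈ P.filter (fun p => s(s, b) ∈ p.edges), y s b p +
        ∑ p ∈ P.filter (fun p => s(a, s) ∈ p.edges), y s b p := by
      calc ∑ p ∈ P, y s b p
          ≤ ∑ p ∈ P.filter (fun p => s(s, b) ∈ p.edges) ∪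
              P.filter (fun p => s(a, s) ∈ p.edges), y s b p := by
            apply Finset.sum_le_sum_of_subset_of_nonneg hsplit
            intro p _ _; exact (hy s b p).1
        _ ≤ _ := by
            rw [← Finset.sum_union_inter]
            have : 0 ≤ ∑ p ∈ (P.filter (fun p => s(s, b) ∈ p.edges)) ∩
                (P.filter (fun p => s(a, s) ∈ p.edges)), y s b p :=
              Finset.sum_nonneg fun p _ => (hy s b p).1
            linarith
    have h3 := hcap' s b hsb s(s, b)
    have h4 := hcap' s b hsb s(a, s)
    rw [← hPdef] at h3 h4
    linarith
  have hp1 : 1 ≤ x s(1, 2) + x s(0, 1) := key 0 1 2 (by decide) (by decide)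
  have hp2 : 1 ≤ x s(3, 4) + x s(2, 3) := key 2 3 4 (by decide) (by decide)
  have hp3 : 1 ≤ x s(5, 6) + x s(4, 5) := key 4 5 6 (by decide) (by decide)
  have hp4 : 1 ≤ x s(7, 8) + x s(6, 7) := key 6 7 8 (by decide) (by decide)
  have hp5 : 1 ≤ x s(9, 0) + x s(8, 9) := key 8 9 0 (by decide) (by decide)
  -- Step 2: the cycle edges already use up the whole budget
  have hCy : ∑ e ∈ cyE, x e = x s(0, 1) + x s(1, 2) + x s(2, 3) + x s(3, 4) + x s(4, 5) +
      x s(5, 6) + x s(6, 7) + x s(7, 8) + x s(8, 9) + x s(9, 0) := by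
    rw [show cyE = {s(0, 1), s(1, 2), s(2, 3), s(3, 4), s(4, 5), s(5, 6), s(6, 7), s(7, 8),
      s(8, 9), s(9, 0)} from rfl]
    rw [Finset.sum_insert (by decide), Finset.sum_insert (by decide),
      Finset.sum_insert (by decide), Finset.sum_insert (by decide),
      Finset.sum_insert (by decide), Finset.sum_insert (by decide),
      Finset.sum_insert (by decide), Finset.sum_insert (by decide),
      Finset.sum_insert (by decide), Finset.sum_singleton]
    ring
  have hCyle : ∑ e ∈ cyE, x e ≤ 5 := by
    refine le_trans (Finset.sum_le_sum_of_subset_of_nonneg hCyE fun e _ _ => (hx e).1) hobj'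
  -- Step 3: non-cycle edges have zero value
  have hdiag : ∀ d : Sym2 (ZMod 10), d ∈ subK5.edgeSet → d ∉ cyE → x d ≤ 0 := by
    intro d hdE hdCy
    have hsub : insert d cyE ⊆ hE.toFinset := by
      intro e he
      rcases Finset.mem_insert.mp he with rfl | he
      · exact (Set.Finite.mem_toFinset _).mpr hdE
      · exact hCyE he
    have h1 : ∑ e ∈ insert d cyE, x e ≤ 5 :=
      le_trans (Finset.sum_le_sum_of_subset_of_nonneg hsub fun e _ _ => (hx e).1) hobj'
    rw [Finset.sum_insert hdCy] at h1
    linarith [hCy, hp1, hp2, hp3, hp4, hp5]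
  -- Step 4: the pair (0,4)
  have h04 : subK5.Adj 0 4 := by decide
  have hdist : subK5.dist 0 4 = 1 := SimpleGraph.dist_eq_one_iff_adj.mpr h04
  set P04 := (hP 0 4).toFinset with hP04
  have hlen5 : ∀ p ∈ P04, p.length ≤ 5 := by
    intro p hp
    have hp' := (Set.Finite.mem_toFinset _).mp hp
    have h2 := hp'.2
    rw [walkWeight_one] at h2
    rw [hB] at h2
    simp only [hdist] at h2
    have : (p.length : ℝ) ≤ 5 := by push_cast at h2 ⊢; linarith
    exact_mod_cast this
  -- walks not through both s(0,1) and s(1,2) carry no flow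
  have hzero : ∀ p ∈ P04, ¬(s(0, 1) ∈ p.edges ∧ s(1, 2) ∈ p.edges) → y 0 4 p = 0 := by
    intro p hp hnot
    by_cases hall : ∀ e ∈ p.edges, ∃ i : ZMod 10, e = s(i, i+1)
    · exact absurd (path04_edges p hall (hlen5 p hp)) hnot
    · push_neg at hall
      obtain ⟨e, heP, hestep⟩ := hall
      have heE : e ∈ subK5.edgeSet := p.edges_subset_edgeSet heP
      have heCy : e ∉ cyE := (edge_cases e heE).resolve_left (not_exists.mpr hestep)
      have hxe : x e ≤ 0 := hdiag e heE heCy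
      have h1 : y 0 4 p ≤ ∑ q ∈ P04.filter (fun q => e ∈ q.edges), y 0 4 q :=
        Finset.single_le_sum (fun q _ => (hy 0 4 q).1)
          (Finset.mem_filter.mpr ⟨hp, heP⟩)
      have h2 := hcap' 0 4 h04 e
      rw [← hP04] at h2
      have := (hy 0 4 p).1
      linarith
  have hflow04 : 1 ≤ ∑ p ∈ P04, y 0 4 p := by
    have := hflow' 0 4 h04
    rwa [← hP04] at this
  have hsum04 : ∑ p ∈ P04, y 0 4 p ≤
      ∑ p ∈ P04.filter (fun p => s(0, 1) ∈ p.edges ∧ s(1, 2) ∈ p.edges), y 0 4 p := by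
    rw [← Finset.sum_filter_add_sum_filter_not P04
      (fun p => s(0, 1) ∈ p.edges ∧ s(1, 2) ∈ p.edges) (y 0 4)]
    have : ∑ p ∈ P04.filter (fun p => ¬(s(0, 1) ∈ p.edges ∧ s(1, 2) ∈ p.edges)), y 0 4 p = 0 :=
      Finset.sum_eq_zero fun p hp => by
        have h := Finset.mem_filter.mp hp
        exact hzero p h.1 h.2
    linarith [this]
  have hx01 : 1 ≤ x s(0, 1) := by
    have hsub : P04.filter (fun p => s(0, 1) ∈ p.edges ∧ s(1, 2) ∈ p.edges) ⊆
        P04.filter (fun p => s(0, 1) ∈ p.edges) := by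
      intro p hp
      have h := Finset.mem_filter.mp hp
      exact Finset.mem_filter.mpr ⟨h.1, h.2.1⟩
    have h1 : ∑ p ∈ P04.filter (fun p => s(0, 1) ∈ p.edges ∧ s(1, 2) ∈ p.edges), y 0 4 p ≤
        ∑ p ∈ P04.filter (fun p => s(0, 1) ∈ p.edges), y 0 4 p :=
      Finset.sum_le_sum_of_subset_of_nonneg hsub fun p _ _ => (hy 0 4 p).1
    have h2 := hcap' 0 4 h04 s(0, 1)
    rw [← hP04] at h2
    linarith
  have hx12 : 1 ≤ x s(1, 2) := by
    have hsub : P04.filter (fun p => s(0, 1) ∈ p.edges ∧ s(1, 2) ∈ p.edges) ⊆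
        P04.filter (fun p => s(1, 2) ∈ p.edges) := by
      intro p hp
      have h := Finset.mem_filter.mp hp
      exact Finset.mem_filter.mpr ⟨h.1, h.2.2⟩
    have h1 : ∑ p ∈ P04.filter (fun p => s(0, 1) ∈ p.edges ∧ s(1, 2) ∈ p.edges), y 0 4 p ≤
        ∑ p ∈ P04.filter (fun p => s(1, 2) ∈ p.edges), y 0 4 p :=
      Finset.sum_le_sum_of_subset_of_nonneg hsub fun p _ _ => (hy 0 4 p).1
    have h2 := hcap' 0 4 h04 s(1, 2)
    rw [← hP04] at h2
    linarith
  -- contradiction: x s(0,1) + x s(1,2) ≤ 1 from the budget, but both are ≥ 1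
  linarith [hCy, hCyle, hp2, hp3, hp4, hp5, (hx s(2,3)).1, (hx s(3,4)).1, (hx s(4,5)).1,
    (hx s(5,6)).1, (hx s(6,7)).1, (hx s(7,8)).1, (hx s(8,9)).1, (hx s(9,0)).1]

end
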